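/- For every integer n ≥ 32, the threshold b_n satisfies (n-1)/√e + 1 < b_n < (n - 3/2)/√e + 5/2. -/

import Mathlib

open Finset

/-- The threshold `b_n = min{ j : 2 ≤ j ≤ n, ∑_{i=j+1}^n 1/(i-2) ≤ 1/2 }` (empty sum = 0). -/
noncomputable def bThresh (n : ℕ) : ℕ :=
  sInf {j : ℕ | 2 ≤ j ∧ j ≤ n ∧ ∑ i ∈ Finset.Icc (j + 1) n, (1 : ℝ) / ((i : ℝ) - 2) ≤ 1 / 2}

/-- `u_n = (b_n - 2)(2n - 4) ∑_{i=b_n}^n 1/(i-2)`. -/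
noncomputable def uVal (n : ℕ) : ℝ :=
  ((bThresh n : ℝ) - 2) * (2 * (n : ℝ) - 4) *
    ∑ i ∈ Finset.Icc (bThresh n) n, (1 : ℝ) / ((i : ℝ) - 2)

/-- `f_n(x) = 3x² - (1+4n)x + (n-2)b_n + 2(n+1) + u_n`. -/
noncomputable def fPoly (n : ℕ) (x : ℝ) : ℝ :=
  3 * x ^ 2 - (1 + 4 * (n : ℝ)) * x + ((n : ℝ) - 2) * (bThresh n : ℝ) + 2 * ((n : ℝ) + 1) + uVal n

/-- The threshold `a_n = min{ j : 2 ≤ j ≤ n, f_n(j) ≤ 0 }`. -/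
noncomputable def aThresh (n : ℕ) : ℕ :=
  sInf {j : ℕ | 2 ≤ j ∧ j ≤ n ∧ fPoly n (j : ℝ) ≤ 0}


open Finset

lemma exp_pade {x : ℝ} (h0 : 0 ≤ x) (h1 : x ≤ 1) : Real.exp x * (2 - x) ≤ 2 + x := by
  have hb := Real.exp_bound' h0 h1 (n := 4) (by norm_num)
  have : Real.exp x ≤ 1 + x + x^2/2 + x^3/6 + 5*x^4/96 := by
    convert hb using 1
    simp [Finset.sum_range_succ, Nat.factorial]
    ring
  nlinarith [pow_nonneg h0 3, pow_nonneg h0 4, pow_nonneg h0 5, Real.exp_pos x]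

lemma log_diff_lower {t : ℝ} (ht : 1 ≤ t) :
    Real.log (t + 1) - Real.log t < 1 / t := by
  have ht0 : 0 < t := by linarith
  have h1 : Real.log ((t+1)/t) < (t+1)/t - 1 :=
    Real.log_lt_sub_one_of_pos (by positivity)
      (ne_of_gt ((one_lt_div ht0).mpr (by linarith)))
  rw [Real.log_div (by linarith) (ne_of_gt ht0)] at h1
  have h2 : (t+1)/t - 1 = 1/t := by field_simp; ring
  linarith [h2 ▸ h1]

lemma log_diff_upper {t : ℝ} (ht : 1 ≤ t) :
    1 / t ≤ Real.log (t + 1/2) - Real.log (t - 1/2) := by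
  have ht0 : 0 < t := by linarith
  have hx0 : 0 ≤ 1/t := by positivity
  have hx1 : 1/t ≤ 1 := by rw [div_le_one ht0]; linarith
  have hp := exp_pade hx0 hx1
  have hE : Real.exp (1/t) ≤ (t + 1/2) / (t - 1/2) := by
    rw [le_div_iff₀ (by linarith)]
    have h2 : Real.exp (1/t) * (2 - 1/t) ≤ 2 + 1/t := hp
    have hkey : Real.exp (1/t) * (t - 1/2) = (Real.exp (1/t) * (2 - 1/t)) * (t/2) := by
      field_simp
    rw [hkey]
    calc (Real.exp (1/t) * (2 - 1/t)) * (t/2) ≤ (2 + 1/t) * (t/2) := by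
          apply mul_le_mul_of_nonneg_right h2 (by positivity)
      _ = t + 1/2 := by field_simp
  have := Real.log_le_log (Real.exp_pos _) hE
  rw [Real.log_exp, Real.log_div (by linarith) (by intro h; rw [sub_eq_zero] at h; linarith [h.symm])] at this
  linarith

lemma sum_telescope_Icc (g : ℕ → ℝ) (a b : ℕ) (hab : a ≤ b + 1) :
    ∑ k ∈ Icc a b, (g (k+1) - g k) = g (b+1) - g a := by
  rw [← Finset.Ico_add_one_right_eq_Icc, Finset.sum_Ico_eq_sum_range]
  have h := Finset.sum_range_sub (fun i => g (a + i)) (b + 1 - a)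
  have h2 : a + (b + 1 - a) = b + 1 := Nat.add_sub_cancel' hab
  simp only [h2] at h
  simp only [add_zero] at h
  rw [← h]
  apply Finset.sum_congr rfl
  intro i _
  simp [add_assoc]

theorem bThresh_bounds_sqrt_e (n : ℕ) (hn : 32 ≤ n) :
    ((n : ℝ) - 1) / Real.sqrt (Real.exp 1) + 1 < (bThresh n : ℝ) ∧
      (bThresh n : ℝ) < ((n : ℝ) - 3 / 2) / Real.sqrt (Real.exp 1) + 5 / 2 := by
  have hsq : Real.sqrt (Real.exp 1) = Real.exp (1/2) := (Real.exp_half 1).symm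
  set E : ℝ := Real.exp (1/2) with hEdef
  have hEpos : 0 < E := Real.exp_pos _
  have hE1 : (1.6:ℝ) < E := by
    rw [hEdef, Real.exp_half, show ((1:ℝ)) = (1:ℝ) from rfl]
    rw [Real.lt_sqrt (by norm_num)]
    nlinarith [Real.exp_one_gt_d9]
  have hE2 : E < 1.7 := by
    rw [hEdef, Real.exp_half]
    rw [Real.sqrt_lt' (by norm_num)]
    nlinarith [Real.exp_one_lt_d9]
  -- the defining set is nonempty
  have hnA : n ∈ {j : ℕ | 2 ≤ j ∧ j ≤ n ∧
      ∑ i ∈ Finset.Icc (j + 1) n, (1 : ℝ) / ((i : ℝ) - 2) ≤ 1 / 2} := by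
    refine ⟨by omega, le_refl n, ?_⟩
    rw [Finset.Icc_eq_empty (by omega)]
    norm_num
  have hbmem : bThresh n ∈ {j : ℕ | 2 ≤ j ∧ j ≤ n ∧
      ∑ i ∈ Finset.Icc (j + 1) n, (1 : ℝ) / ((i : ℝ) - 2) ≤ 1 / 2} := by
    unfold bThresh; exact Nat.sInf_mem ⟨n, hnA⟩
  obtain ⟨hb2, hbn, hbsum⟩ := hbmem
  set b := bThresh n with hbdef
  constructor
  · -- lower bound
    rw [hsq]
    rcases eq_or_lt_of_le hbn with heq | hlt
    · -- b = n
      have : ((n:ℝ) - 1)/E < (n:ℝ) - 1 := by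
        rw [div_lt_iff₀ hEpos]
        nlinarith [show (32:ℝ) ≤ n by exact_mod_cast hn]
      rw [heq]; linarith
    · -- b < n : strict comparison with log telescope
      have htel := sum_telescope_Icc (fun i => Real.log ((i:ℝ) - 2)) (b+1) n (by omega)
      have hlog : Real.log ((n:ℝ) - 1) - Real.log ((b:ℝ) - 1) <
          ∑ i ∈ Finset.Icc (b+1) n, (1:ℝ)/((i:ℝ) - 2) := by
        have := Finset.sum_lt_sum_of_nonempty
          (s := Finset.Icc (b+1) n)
          (by rw [Finset.nonempty_Icc]; omega)
          (f := fun i => Real.log (((i+1:ℕ):ℝ) - 2) - Real.log ((i:ℝ) - 2))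
          (g := fun i => (1:ℝ)/((i:ℝ) - 2))
          (by
            intro i hi
            rw [Finset.mem_Icc] at hi
            have hi3 : 3 ≤ i := by omega
            have ht : (1:ℝ) ≤ (i:ℝ) - 2 := by
              have : (3:ℝ) ≤ (i:ℝ) := by exact_mod_cast hi3
              linarith
            have := log_diff_lower ht
            have hc : ((i+1:ℕ):ℝ) - 2 = ((i:ℝ) - 2) + 1 := by push_cast; ring
            show Real.log (((i+1:ℕ):ℝ) - 2) - Real.log ((i:ℝ) - 2) < 1/((i:ℝ) - 2)
            rw [hc]
            exact this)
        rw [htel] at this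
        have hc1 : ((n+1:ℕ):ℝ) - 2 = (n:ℝ) - 1 := by push_cast; ring
        have hc2 : ((b+1:ℕ):ℝ) - 2 = (b:ℝ) - 1 := by push_cast; ring
        rw [hc1, hc2] at this
        exact this
      have hkey : Real.log ((n:ℝ) - 1) - Real.log ((b:ℝ) - 1) < 1/2 := lt_of_lt_of_le hlog hbsum
      have hbpos : (0:ℝ) < (b:ℝ) - 1 := by
        have : (2:ℝ) ≤ (b:ℝ) := by exact_mod_cast hb2
        linarith
      have hnpos : (0:ℝ) < (n:ℝ) - 1 := by
        have : (32:ℝ) ≤ (n:ℝ) := by exact_mod_cast hn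
        linarith
      rw [← Real.log_div (ne_of_gt hnpos) (ne_of_gt hbpos)] at hkey
      rw [Real.log_lt_iff_lt_exp (by positivity)] at hkey
      rw [div_lt_iff₀ hbpos] at hkey
      rw [div_add' _ _ _ (ne_of_gt hEpos), div_lt_iff₀ hEpos]
      nlinarith
  · -- upper bound
    rw [hsq]
    set x : ℝ := ((n:ℝ) - 3/2)/E + 3/2 with hxdef
    have hn32 : (32:ℝ) ≤ (n:ℝ) := by exact_mod_cast hn
    have hx0 : 0 ≤ x := by
      have h0 : 0 ≤ ((n:ℝ) - 3/2)/E := div_nonneg (by linarith) hEpos.le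
      rw [hxdef]; linarith
    set m : ℕ := ⌈x⌉₊ with hmdef
    have hxm : x ≤ (m:ℝ) := Nat.le_ceil x
    have hmx : (m:ℝ) < x + 1 := Nat.ceil_lt_add_one hx0
    have hdivle : ((n:ℝ) - 3/2)/E ≤ ((n:ℝ) - 3/2)/1.6 :=
      div_le_div_of_nonneg_left (by linarith) (by norm_num) (le_of_lt hE1)
    have hdivge : ((n:ℝ) - 3/2)/1.7 ≤ ((n:ℝ) - 3/2)/E :=
      div_le_div_of_nonneg_left (by linarith) hEpos (le_of_lt hE2)
    have e16 : ((n:ℝ) - 3/2)/1.6 = ((n:ℝ) - 3/2) * (5/8) := by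
      rw [div_eq_mul_inv]; norm_num
    have e17 : ((n:ℝ) - 3/2)/1.7 = ((n:ℝ) - 3/2) * (10/17) := by
      rw [div_eq_mul_inv]; norm_num
    have hmltn : m < n := by
      have h1 : (m:ℝ) < (n:ℝ) := by
        calc (m:ℝ) < x + 1 := hmx
          _ ≤ ((n:ℝ) - 3/2)/1.6 + 5/2 := by rw [hxdef]; linarith
          _ < (n:ℝ) := by rw [e16]; nlinarith
      exact_mod_cast h1
    have hm2 : 2 ≤ m := by
      have h1 : (2:ℝ) ≤ (m:ℝ) := by
        calc (2:ℝ) ≤ ((n:ℝ) - 3/2)/1.7 + 3/2 := by rw [e17]; nlinarith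
          _ ≤ x := by rw [hxdef]; linarith
          _ ≤ (m:ℝ) := hxm
      exact_mod_cast h1
    have hm32 : (0:ℝ) < (m:ℝ) - 3/2 := by
      have : (2:ℝ) ≤ (m:ℝ) := by exact_mod_cast hm2
      linarith
    -- the sum at m is at most 1/2
    have hmsum : ∑ i ∈ Finset.Icc (m + 1) n, (1:ℝ)/((i:ℝ) - 2) ≤ 1/2 := by
      have htel := sum_telescope_Icc (fun i => Real.log ((i:ℝ) - 5/2)) (m+1) n (by omega)
      have hle : ∑ i ∈ Finset.Icc (m+1) n, (1:ℝ)/((i:ℝ) - 2) ≤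
          Real.log ((n:ℝ) - 3/2) - Real.log ((m:ℝ) - 3/2) := by
        have hsum := Finset.sum_le_sum
          (s := Finset.Icc (m+1) n)
          (f := fun i : ℕ => (1:ℝ)/((i:ℝ) - 2))
          (g := fun i : ℕ => Real.log (((i+1:ℕ):ℝ) - 5/2) - Real.log ((i:ℝ) - 5/2))
          (by
            intro i hi
            rw [Finset.mem_Icc] at hi
            have hi3 : 3 ≤ i := by omega
            have ht : (1:ℝ) ≤ (i:ℝ) - 2 := by
              have : (3:ℝ) ≤ (i:ℝ) := by exact_mod_cast hi3
              linarith
            have := log_diff_upper ht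
            have hc : ((i+1:ℕ):ℝ) - 5/2 = ((i:ℝ) - 2) + 1/2 := by push_cast; ring
            have hc2 : (i:ℝ) - 5/2 = ((i:ℝ) - 2) - 1/2 := by ring
            show (1:ℝ)/((i:ℝ) - 2) ≤ Real.log (((i+1:ℕ):ℝ) - 5/2) - Real.log ((i:ℝ) - 5/2)
            rw [hc, hc2]
            exact this)
        rw [htel] at hsum
        have hc1 : ((n+1:ℕ):ℝ) - 5/2 = (n:ℝ) - 3/2 := by push_cast; ring
        have hc2 : ((m+1:ℕ):ℝ) - 5/2 = (m:ℝ) - 3/2 := by push_cast; ring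
        rw [hc1, hc2] at hsum
        exact hsum
      have hfin : Real.log ((n:ℝ) - 3/2) - Real.log ((m:ℝ) - 3/2) ≤ 1/2 := by
        have hn32' : (0:ℝ) < (n:ℝ) - 3/2 := by linarith
        rw [← Real.log_div (ne_of_gt hn32') (ne_of_gt hm32)]
        rw [Real.log_le_iff_le_exp (by positivity)]
        rw [div_le_iff₀ hm32]
        have h1 : ((n:ℝ) - 3/2)/E ≤ (m:ℝ) - 3/2 := by rw [hxdef] at hxm; linarith
        rw [div_le_iff₀ hEpos] at h1
        linarith [h1]
      linarith
    have hble : b ≤ m := by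
      rw [hbdef]
      unfold bThresh
      exact Nat.sInf_le ⟨hm2, le_of_lt hmltn, hmsum⟩
    calc (b:ℝ) ≤ (m:ℝ) := by exact_mod_cast hble
      _ < x + 1 := hmx
      _ = ((n:ℝ) - 3/2)/E + 5/2 := by rw [hxdef]; ring
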